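/- Let R(τ) = (1/2)·log(G₁₂(τ)² − G₁₁(τ)²). Then lim_{τ→∞} [R(τ) − (1/2)·log τ] = (1/2)·log(128/π⁴); in particular the Rényi entropy of the resonant mode grows logarithmically, R(τ) ∼ (1/2)·log τ. -/

import Mathlib

open Real Filter Topology

/-- Complete elliptic integral of the first kind. -/
noncomputable def ellipticK (k : ℝ) : ℝ :=
  ∫ α in (0:ℝ)..(Real.pi / 2), 1 / Real.sqrt (1 - k ^ 2 * Real.sin α ^ 2)

/-- Complete elliptic integral of the second kind. -/
noncomputable def ellipticE (k : ℝ) : ℝ :=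
  ∫ α in (0:ℝ)..(Real.pi / 2), Real.sqrt (1 - k ^ 2 * Real.sin α ^ 2)

/-- κ(τ) = √(1 − e^{−8τ}). -/
noncomputable def kappa (τ : ℝ) : ℝ := Real.sqrt (1 - Real.exp (-8 * τ))

/-- κ̃(τ) = e^{−4τ}. -/
noncomputable def kappaT (τ : ℝ) : ℝ := Real.exp (-4 * τ)

/-- Diagonal entry of the reduced covariance matrix of the resonant mode. -/
noncomputable def G₁₁ (τ : ℝ) : ℝ :=
  -(4 / (Real.pi ^ 2 * kappa τ ^ 2)) *
    ((ellipticE (kappa τ) - kappaT τ ^ 2 * ellipticK (kappa τ)) *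
      (ellipticK (kappa τ) - ellipticE (kappa τ)))

/-- Off-diagonal entry of the reduced covariance matrix of the resonant mode. -/
noncomputable def G₁₂ (τ : ℝ) : ℝ :=
  (4 / Real.pi ^ 2) * (ellipticE (kappa τ) * ellipticK (kappa τ))


lemma sqrt_add_le' {x y : ℝ} (hx : 0 ≤ x) (hy : 0 ≤ y) :
    Real.sqrt (x + y) ≤ Real.sqrt x + Real.sqrt y := by
  have h : x + y ≤ (Real.sqrt x + Real.sqrt y) ^ 2 := by
    have hxx := Real.sq_sqrt hx
    have hyy := Real.sq_sqrt hy
    nlinarith [Real.sqrt_nonneg x, Real.sqrt_nonneg y,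
      mul_nonneg (Real.sqrt_nonneg x) (Real.sqrt_nonneg y)]
  calc Real.sqrt (x + y) ≤ Real.sqrt ((Real.sqrt x + Real.sqrt y) ^ 2) := Real.sqrt_le_sqrt h
    _ = Real.sqrt x + Real.sqrt y := by rw [Real.sqrt_sq (by positivity)]

lemma kappaT_sq (τ : ℝ) : kappaT τ ^ 2 = Real.exp (-8 * τ) := by
  rw [kappaT, sq, ← Real.exp_add]; ring_nf

lemma kappa_sq {τ : ℝ} (hτ : 0 ≤ τ) : kappa τ ^ 2 = 1 - Real.exp (-8 * τ) := by
  have h : Real.exp (-8 * τ) ≤ 1 := by rw [Real.exp_le_one_iff]; linarith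
  exact Real.sq_sqrt (by linarith)

lemma integrand_eq {τ : ℝ} (hτ : 0 ≤ τ) (α : ℝ) :
    1 - kappa τ ^ 2 * Real.sin α ^ 2
      = Real.cos α ^ 2 + kappaT τ ^ 2 * Real.sin α ^ 2 := by
  rw [kappa_sq hτ, kappaT_sq]
  have := Real.sin_sq_add_cos_sq α
  nlinarith []

lemma denom_pos {τ : ℝ} (hτ : 0 ≤ τ) (α : ℝ) :
    kappaT τ ^ 2 ≤ Real.cos α ^ 2 + kappaT τ ^ 2 * Real.sin α ^ 2 := by
  have h1 : kappaT τ ≤ 1 := by rw [kappaT, Real.exp_le_one_iff]; linarith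
  have h2 : (0:ℝ) < kappaT τ := Real.exp_pos _
  have h3 : kappaT τ ^ 2 ≤ 1 := by nlinarith
  have := Real.sin_sq_add_cos_sq α
  nlinarith [mul_nonneg (sub_nonneg.2 h3) (sq_nonneg (Real.cos α))]

lemma kappaT_pos (τ : ℝ) : 0 < kappaT τ := Real.exp_pos _

lemma cont_f {τ : ℝ} (hτ : 0 ≤ τ) :
    Continuous (fun α => 1 / Real.sqrt (Real.cos α ^ 2 + kappaT τ ^ 2 * Real.sin α ^ 2)) := by
  apply Continuous.div continuous_const (by fun_prop)
  intro x
  have h1 := denom_pos hτ x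
  have h2 : (0:ℝ) < kappaT τ ^ 2 := pow_pos (kappaT_pos τ) 2
  exact (Real.sqrt_pos.2 (lt_of_lt_of_le h2 h1)).ne'

lemma E_eq {τ : ℝ} (hτ : 0 ≤ τ) :
    ellipticE (kappa τ)
      = ∫ α in (0:ℝ)..(Real.pi / 2), Real.sqrt (Real.cos α ^ 2 + kappaT τ ^ 2 * Real.sin α ^ 2) := by
  unfold ellipticE
  apply intervalIntegral.integral_congr
  intro α _
  simp only [integrand_eq hτ]

lemma E_bounds {τ : ℝ} (hτ : 0 ≤ τ) :
    1 ≤ ellipticE (kappa τ) ∧ ellipticE (kappa τ) ≤ 1 + kappaT τ * (Real.pi / 2) := by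
  have hpi : (0:ℝ) ≤ Real.pi / 2 := by positivity
  have hcont : Continuous (fun α => Real.sqrt (Real.cos α ^ 2 + kappaT τ ^ 2 * Real.sin α ^ 2)) := by
    fun_prop
  rw [E_eq hτ]
  constructor
  · have h1 : (1:ℝ) = ∫ α in (0:ℝ)..(Real.pi/2), Real.cos α := by
      rw [integral_cos]; simp
    rw [h1]
    apply intervalIntegral.integral_mono_on hpi
      (Real.continuous_cos.intervalIntegrable _ _) (hcont.intervalIntegrable _ _)
    intro x hx
    have hc : 0 ≤ Real.cos x := Real.cos_nonneg_of_mem_Icc ⟨by linarith [hx.1], by linarith [hx.2]⟩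
    calc Real.cos x = Real.sqrt (Real.cos x ^ 2) := by rw [Real.sqrt_sq hc]
      _ ≤ _ := Real.sqrt_le_sqrt (by nlinarith [sq_nonneg (Real.sin x), (kappaT_pos τ).le, sq_nonneg (kappaT τ)])
  · have h2 : (1:ℝ) + kappaT τ * (Real.pi/2) = ∫ α in (0:ℝ)..(Real.pi/2), (Real.cos α + kappaT τ) := by
      rw [intervalIntegral.integral_add (Real.continuous_cos.intervalIntegrable _ _)
        (intervalIntegrable_const), integral_cos]
      simp [mul_comm]
    rw [h2]
    apply intervalIntegral.integral_mono_on hpi (hcont.intervalIntegrable _ _)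
      ((Real.continuous_cos.add continuous_const).intervalIntegrable _ _)
    intro x hx
    have hc : 0 ≤ Real.cos x := Real.cos_nonneg_of_mem_Icc ⟨by linarith [hx.1], by linarith [hx.2]⟩
    have hk := (kappaT_pos τ).le
    calc Real.sqrt (Real.cos x ^ 2 + kappaT τ ^ 2 * Real.sin x ^ 2)
        ≤ Real.sqrt (Real.cos x ^ 2) + Real.sqrt (kappaT τ ^ 2 * Real.sin x ^ 2) :=
          sqrt_add_le' (sq_nonneg _) (by positivity)
      _ ≤ Real.cos x + kappaT τ := by
          rw [Real.sqrt_sq hc]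
          have : Real.sqrt (kappaT τ ^ 2 * Real.sin x ^ 2) = kappaT τ * |Real.sin x| := by
            rw [Real.sqrt_mul (sq_nonneg _), Real.sqrt_sq hk, Real.sqrt_sq_eq_abs]
          rw [this]
          have habs : |Real.sin x| ≤ 1 := abs_le.2 ⟨Real.neg_one_le_sin x, Real.sin_le_one x⟩
          nlinarith [mul_le_mul_of_nonneg_left habs hk]

lemma cont_aux (p q : ℝ) (hq : 0 < q) :
    Continuous (fun α : ℝ => 1 / Real.sqrt (p ^ 2 * (Real.pi / 2 - α) ^ 2 + q ^ 2)) := by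
  apply Continuous.div continuous_const (by fun_prop)
  intro x
  have h2 : (0:ℝ) < q ^ 2 := pow_pos hq 2
  exact (Real.sqrt_pos.2 (by nlinarith [sq_nonneg (p * (Real.pi / 2 - x))])).ne'

lemma ftc_aux (p q δ : ℝ) (hp : 0 < p) (hq : 0 < q) :
    ∫ α in (Real.pi / 2 - δ)..(Real.pi / 2),
        1 / Real.sqrt (p ^ 2 * (Real.pi / 2 - α) ^ 2 + q ^ 2)
      = (1 / p) * Real.arsinh (p * δ / q) := by
  have hderiv : ∀ x ∈ Set.uIcc (Real.pi / 2 - δ) (Real.pi / 2),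
      HasDerivAt (fun α => -(1 / p) * Real.arsinh (p * (Real.pi / 2 - α) / q))
        (1 / Real.sqrt (p ^ 2 * (Real.pi / 2 - x) ^ 2 + q ^ 2)) x := by
    intro x _
    have hg : HasDerivAt (fun α : ℝ => p * (Real.pi / 2 - α) / q) (-p / q) x := by
      have h1 : HasDerivAt (fun α : ℝ => Real.pi / 2 - α) (-1) x := by
        simpa using (hasDerivAt_id x).const_sub (Real.pi / 2)
      have h2 := (h1.const_mul p).div_const q
      exact h2.congr_deriv (by ring)
    have h3 := (Real.hasDerivAt_arsinh (p * (Real.pi / 2 - x) / q)).comp x hg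
    have h4 := h3.const_mul (-(1 / p))
    refine h4.congr_deriv ?_
    have hkey : q * Real.sqrt (1 + (p * (Real.pi / 2 - x) / q) ^ 2)
        = Real.sqrt (p ^ 2 * (Real.pi / 2 - x) ^ 2 + q ^ 2) := by
      rw [← Real.sqrt_sq hq.le, ← Real.sqrt_mul (sq_nonneg q)]
      rw [Real.sqrt_sq hq.le]
      congr 1
      field_simp
      ring
    have hpos : 0 < Real.sqrt (1 + (p * (Real.pi / 2 - x) / q) ^ 2) :=
      Real.sqrt_pos.2 (by positivity)
    rw [← hkey]
    field_simp
  rw [intervalIntegral.integral_eq_sub_of_hasDerivAt hderiv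
    ((cont_aux p q hq).intervalIntegrable _ _)]
  have h5 : Real.pi / 2 - (Real.pi / 2 - δ) = δ := by ring
  simp only [sub_self, h5, mul_zero, zero_div, Real.arsinh_zero, mul_zero, neg_mul]
  ring


lemma K_eq {τ : ℝ} (hτ : 0 ≤ τ) :
    ellipticK (kappa τ)
      = ∫ α in (0:ℝ)..(Real.pi / 2),
          1 / Real.sqrt (Real.cos α ^ 2 + kappaT τ ^ 2 * Real.sin α ^ 2) := by
  unfold ellipticK
  apply intervalIntegral.integral_congr
  intro α _
  simp only [integrand_eq hτ]

lemma sqrt_denom_pos {τ : ℝ} (hτ : 0 ≤ τ) (x : ℝ) :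
    0 < Real.sqrt (Real.cos x ^ 2 + kappaT τ ^ 2 * Real.sin x ^ 2) :=
  Real.sqrt_pos.2 (lt_of_lt_of_le (pow_pos (kappaT_pos τ) 2) (denom_pos hτ x))

lemma K_lower {δ τ : ℝ} (hδ0 : 0 < δ) (hδ1 : δ ≤ 1) (hτ : 0 < τ) :
    Real.arsinh (δ / kappaT τ) ≤ ellipticK (kappa τ) := by
  have hτ0 : 0 ≤ τ := hτ.le
  have hc : 0 < kappaT τ := kappaT_pos τ
  have hδπ : δ ≤ Real.pi / 2 := hδ1.trans Real.one_le_pi_div_two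
  have h0 : (0:ℝ) ≤ Real.pi / 2 - δ := by linarith
  set f : ℝ → ℝ := fun α => 1 / Real.sqrt (Real.cos α ^ 2 + kappaT τ ^ 2 * Real.sin α ^ 2)
    with hf
  have hfc : Continuous f := cont_f hτ0
  have hsplit : (∫ α in (0:ℝ)..(Real.pi / 2 - δ), f α)
      + ∫ α in (Real.pi / 2 - δ)..(Real.pi / 2), f α
      = ∫ α in (0:ℝ)..(Real.pi / 2), f α :=
    intervalIntegral.integral_add_adjacent_intervals (hfc.intervalIntegrable _ _)
      (hfc.intervalIntegrable _ _)
  have hA : 0 ≤ ∫ α in (0:ℝ)..(Real.pi / 2 - δ), f α := by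
    apply intervalIntegral.integral_nonneg h0
    intro x _
    positivity
  have hB : Real.arsinh (δ / kappaT τ)
      ≤ ∫ α in (Real.pi / 2 - δ)..(Real.pi / 2), f α := by
    have heval := ftc_aux 1 (kappaT τ) δ one_pos hc
    have hmono : (∫ α in (Real.pi / 2 - δ)..(Real.pi / 2),
        1 / Real.sqrt (1 ^ 2 * (Real.pi / 2 - α) ^ 2 + kappaT τ ^ 2))
        ≤ ∫ α in (Real.pi / 2 - δ)..(Real.pi / 2), f α := by
      apply intervalIntegral.integral_mono_on (by linarith)
        ((cont_aux 1 (kappaT τ) hc).intervalIntegrable _ _) (hfc.intervalIntegrable _ _)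
      intro x hx
      have hx1 : Real.pi / 2 - δ ≤ x := hx.1
      have hx2 : x ≤ Real.pi / 2 := hx.2
      have hu0 : 0 ≤ Real.pi / 2 - x := by linarith
      have hcosx : Real.cos x = Real.sin (Real.pi / 2 - x) := (Real.sin_pi_div_two_sub x).symm
      have hcos_le : Real.cos x ≤ Real.pi / 2 - x := by
        rw [hcosx]; exact Real.sin_le hu0
      have hcos0 : 0 ≤ Real.cos x :=
        Real.cos_nonneg_of_mem_Icc ⟨by linarith, hx2⟩
      have hsin : Real.sin x ^ 2 ≤ 1 := by
        nlinarith [Real.sin_le_one x, Real.neg_one_le_sin x]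
      have hle : Real.cos x ^ 2 + kappaT τ ^ 2 * Real.sin x ^ 2
          ≤ 1 ^ 2 * (Real.pi / 2 - x) ^ 2 + kappaT τ ^ 2 := by
        nlinarith [sq_nonneg (kappaT τ)]
      apply one_div_le_one_div_of_le (sqrt_denom_pos hτ0 x)
      exact Real.sqrt_le_sqrt hle
    calc Real.arsinh (δ / kappaT τ)
        = (1 / 1) * Real.arsinh (1 * δ / kappaT τ) := by norm_num
      _ ≤ _ := heval ▸ hmono
  rw [K_eq hτ0, ← hsplit]
  linarith

lemma K_upper {δ τ : ℝ} (hδ0 : 0 < δ) (hδ1 : δ ≤ 1) (hτ : 0 < τ) :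
    ellipticK (kappa τ) ≤ Real.pi / 2 / Real.sin δ
      + (1 / (1 - δ ^ 2 / 4)) *
          Real.arsinh ((1 - δ ^ 2 / 4) * δ / (Real.cos δ * kappaT τ)) := by
  have hτ0 : 0 ≤ τ := hτ.le
  have hc : 0 < kappaT τ := kappaT_pos τ
  have hδπ : δ ≤ Real.pi / 2 := hδ1.trans Real.one_le_pi_div_two
  have hδπ2 : δ < Real.pi / 2 := by nlinarith [Real.pi_gt_three]
  have h0 : (0:ℝ) ≤ Real.pi / 2 - δ := by linarith
  have ha : (0:ℝ) < 1 - δ ^ 2 / 4 := by nlinarith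
  have hb : (0:ℝ) < Real.cos δ := Real.cos_pos_of_mem_Ioo ⟨by linarith [Real.pi_pos], hδπ2⟩
  have hsδ : 0 < Real.sin δ := Real.sin_pos_of_pos_of_lt_pi hδ0 (by nlinarith [Real.pi_gt_three])
  set a := 1 - δ ^ 2 / 4 with ha_def
  set b := Real.cos δ with hb_def
  set f : ℝ → ℝ := fun α => 1 / Real.sqrt (Real.cos α ^ 2 + kappaT τ ^ 2 * Real.sin α ^ 2)
    with hf
  have hfc : Continuous f := cont_f hτ0
  have hsplit : (∫ α in (0:ℝ)..(Real.pi / 2 - δ), f α)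
      + ∫ α in (Real.pi / 2 - δ)..(Real.pi / 2), f α
      = ∫ α in (0:ℝ)..(Real.pi / 2), f α :=
    intervalIntegral.integral_add_adjacent_intervals (hfc.intervalIntegrable _ _)
      (hfc.intervalIntegrable _ _)
  have hA : (∫ α in (0:ℝ)..(Real.pi / 2 - δ), f α) ≤ Real.pi / 2 / Real.sin δ := by
    have hmono : (∫ α in (0:ℝ)..(Real.pi / 2 - δ), f α)
        ≤ ∫ _α in (0:ℝ)..(Real.pi / 2 - δ), (1 / Real.sin δ) := by
      apply intervalIntegral.integral_mono_on h0 (hfc.intervalIntegrable _ _)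
        intervalIntegrable_const
      intro x hx
      have hx1 : 0 ≤ x := hx.1
      have hx2 : x ≤ Real.pi / 2 - δ := hx.2
      have hcos : Real.sin δ ≤ Real.cos x := by
        have := Real.cos_le_cos_of_nonneg_of_le_pi hx1 (by linarith [Real.pi_pos]) hx2
        rwa [Real.cos_pi_div_two_sub] at this
      apply one_div_le_one_div_of_le hsδ
      calc Real.sin δ ≤ Real.cos x := hcos
        _ = Real.sqrt (Real.cos x ^ 2) := (Real.sqrt_sq (by linarith)).symm
        _ ≤ _ := Real.sqrt_le_sqrt (by nlinarith [sq_nonneg (kappaT τ * Real.sin x)])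
    calc (∫ α in (0:ℝ)..(Real.pi / 2 - δ), f α)
        ≤ (Real.pi / 2 - δ) * (1 / Real.sin δ) := by
          rw [intervalIntegral.integral_const] at hmono
          simpa using hmono
      _ ≤ Real.pi / 2 / Real.sin δ := by
          rw [show Real.pi / 2 / Real.sin δ = Real.pi / 2 * (1 / Real.sin δ) from
            div_eq_mul_one_div _ _]
          have h1 : (0:ℝ) ≤ 1 / Real.sin δ := by positivity
          nlinarith
  have hB : (∫ α in (Real.pi / 2 - δ)..(Real.pi / 2), f α)
      ≤ (1 / a) * Real.arsinh (a * δ / (b * kappaT τ)) := by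
    have hbc : 0 < b * kappaT τ := mul_pos hb hc
    have heval := ftc_aux a (b * kappaT τ) δ ha hbc
    rw [← heval]
    apply intervalIntegral.integral_mono_on (by linarith) (hfc.intervalIntegrable _ _)
      ((cont_aux a (b * kappaT τ) hbc).intervalIntegrable _ _)
    intro x hx
    have hx1 : Real.pi / 2 - δ ≤ x := hx.1
    have hx2 : x ≤ Real.pi / 2 := hx.2
    have hu0 : 0 ≤ Real.pi / 2 - x := by linarith
    have huδ : Real.pi / 2 - x ≤ δ := by linarith
    -- cos x ≥ a * (π/2 - x)
    have hcos_ge : a * (Real.pi / 2 - x) ≤ Real.cos x := by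
      rw [← Real.sin_pi_div_two_sub x]
      rcases eq_or_lt_of_le hu0 with h | h
      · rw [← h]; simp
      · have hs := Real.sin_gt_sub_cube h
        have hu2 : (Real.pi / 2 - x) ^ 2 ≤ δ ^ 2 := by nlinarith
        nlinarith [mul_le_mul_of_nonneg_left hu2 hu0]
    -- sin x ≥ b
    have hsin_ge : b ≤ Real.sin x := by
      rw [← Real.cos_pi_div_two_sub x]
      exact Real.cos_le_cos_of_nonneg_of_le_pi hu0 (by linarith [Real.pi_pos]) huδ
    have hle : a ^ 2 * (Real.pi / 2 - x) ^ 2 + (b * kappaT τ) ^ 2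
        ≤ Real.cos x ^ 2 + kappaT τ ^ 2 * Real.sin x ^ 2 := by
      have h1 : (a * (Real.pi / 2 - x)) ^ 2 ≤ Real.cos x ^ 2 :=
        pow_le_pow_left₀ (mul_nonneg ha.le hu0) hcos_ge 2
      have h2 : b ^ 2 ≤ Real.sin x ^ 2 := pow_le_pow_left₀ hb.le hsin_ge 2
      have h3 := mul_le_mul_of_nonneg_left h2 (sq_nonneg (kappaT τ))
      have e1 : (a * (Real.pi / 2 - x)) ^ 2 = a ^ 2 * (Real.pi / 2 - x) ^ 2 := by ring
      have e2 : (b * kappaT τ) ^ 2 = kappaT τ ^ 2 * b ^ 2 := by ring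
      linarith [e1 ▸ h1, e2.le.trans h3]
    apply one_div_le_one_div_of_le
      (Real.sqrt_pos.2 (by positivity))
    exact Real.sqrt_le_sqrt hle
  rw [K_eq hτ0, ← hsplit]
  linarith

lemma arsinh_bounds {x : ℝ} (hx : 0 < x) :
    Real.log x ≤ Real.arsinh x ∧ Real.arsinh x ≤ Real.log (1 + 2 * x) := by
  have hs : Real.sqrt (1 + x ^ 2) ≤ 1 + x := by
    rw [show (1:ℝ) + x = Real.sqrt ((1 + x) ^ 2) from (Real.sqrt_sq (by linarith)).symm]
    exact Real.sqrt_le_sqrt (by nlinarith)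
  have hs0 : 0 ≤ Real.sqrt (1 + x ^ 2) := Real.sqrt_nonneg _
  unfold Real.arsinh
  constructor
  · exact Real.log_le_log hx (by nlinarith)
  · exact Real.log_le_log (by positivity) (by nlinarith)

lemma arsinh_div_tendsto (C : ℝ) (hC : 0 < C) :
    Tendsto (fun τ => Real.arsinh (C * Real.exp (4 * τ)) / τ) atTop (𝓝 4) := by
  have hlo : Tendsto (fun τ : ℝ => Real.log C * τ⁻¹ + 4) atTop (𝓝 (Real.log C * 0 + 4)) :=
    (tendsto_inv_atTop_zero.const_mul _).add_const 4
  have hhi : Tendsto (fun τ : ℝ => Real.log (1 + 2 * C) * τ⁻¹ + 4) atTop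
      (𝓝 (Real.log (1 + 2 * C) * 0 + 4)) :=
    (tendsto_inv_atTop_zero.const_mul _).add_const 4
  rw [mul_zero, zero_add] at hlo hhi
  apply tendsto_of_tendsto_of_tendsto_of_le_of_le' hlo hhi
  · filter_upwards [eventually_ge_atTop (1:ℝ)] with τ hτ1
    have hτ0 : (0:ℝ) < τ := by linarith
    have hx : 0 < C * Real.exp (4 * τ) := by positivity
    have h1 := (arsinh_bounds hx).1
    have h2 : Real.log (C * Real.exp (4 * τ)) = Real.log C + 4 * τ := by
      rw [Real.log_mul hC.ne' (Real.exp_ne_zero _), Real.log_exp]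
    rw [h2] at h1
    rw [show Real.log C * τ⁻¹ + 4 = (Real.log C + 4 * τ) / τ by field_simp]
    exact div_le_div_of_nonneg_right h1 hτ0.le
  · filter_upwards [eventually_ge_atTop (1:ℝ)] with τ hτ1
    have hτ0 : (0:ℝ) < τ := by linarith
    have hx : 0 < C * Real.exp (4 * τ) := by positivity
    have h1 := (arsinh_bounds hx).2
    have h2 : Real.arsinh (C * Real.exp (4 * τ)) ≤ Real.log (1 + 2 * C) + 4 * τ := by
      refine h1.trans ?_
      have he1 : (1:ℝ) ≤ Real.exp (4 * τ) := by
        rw [Real.one_le_exp_iff]; linarith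
      have h3 : 1 + 2 * (C * Real.exp (4 * τ)) ≤ (1 + 2 * C) * Real.exp (4 * τ) := by
        nlinarith
      calc Real.log (1 + 2 * (C * Real.exp (4 * τ)))
          ≤ Real.log ((1 + 2 * C) * Real.exp (4 * τ)) :=
            Real.log_le_log (by positivity) h3
        _ = Real.log (1 + 2 * C) + 4 * τ := by
            rw [Real.log_mul (by positivity) (Real.exp_ne_zero _), Real.log_exp]
    rw [show Real.log (1 + 2 * C) * τ⁻¹ + 4 = (Real.log (1 + 2 * C) + 4 * τ) / τ by
      field_simp]
    exact div_le_div_of_nonneg_right h2 hτ0.le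

lemma K_div_tendsto : Tendsto (fun τ => ellipticK (kappa τ) / τ) atTop (𝓝 4) := by
  rw [Metric.tendsto_atTop]
  intro ε hε
  set ε' := min ε 1 with hε'_def
  have hε'0 : 0 < ε' := lt_min hε one_pos
  have hε'1 : ε' ≤ 1 := min_le_right _ _
  have hε'ε : ε' ≤ ε := min_le_left _ _
  set δ := Real.sqrt (ε' / 2) with hδ_def
  have hδ0 : 0 < δ := Real.sqrt_pos.2 (by linarith)
  have hδ2 : δ ^ 2 = ε' / 2 := Real.sq_sqrt (by linarith)
  have hδ1 : δ ≤ 1 := by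
    rw [hδ_def]
    calc Real.sqrt (ε' / 2) ≤ Real.sqrt 1 := Real.sqrt_le_sqrt (by linarith)
      _ = 1 := Real.sqrt_one
  set a := 1 - δ ^ 2 / 4 with ha_def
  have ha : (0:ℝ) < a := by rw [ha_def, hδ2]; linarith
  have hδπ2 : δ < Real.pi / 2 := by nlinarith [Real.pi_gt_three]
  set b := Real.cos δ with hb_def
  have hb : (0:ℝ) < b := Real.cos_pos_of_mem_Ioo ⟨by linarith [Real.pi_pos], hδπ2⟩
  have hsδ : 0 < Real.sin δ :=
    Real.sin_pos_of_pos_of_lt_pi hδ0 (by nlinarith [Real.pi_gt_three])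
  -- lower
  have hlowT := arsinh_div_tendsto δ hδ0
  have hlow_ev : ∀ᶠ τ in atTop, 4 - ε < Real.arsinh (δ * Real.exp (4 * τ)) / τ :=
    hlowT.eventually_const_lt (by linarith)
  -- upper
  have hupT : Tendsto (fun τ : ℝ => Real.pi / 2 / Real.sin δ * τ⁻¹
      + (1 / a) * (Real.arsinh (a * δ / b * Real.exp (4 * τ)) / τ)) atTop
      (𝓝 (Real.pi / 2 / Real.sin δ * 0 + (1 / a) * 4)) :=
    (tendsto_inv_atTop_zero.const_mul _).add
      ((arsinh_div_tendsto (a * δ / b) (by positivity)).const_mul _)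
  rw [mul_zero, zero_add] at hupT
  have hlim : (1 / a) * 4 < 4 + ε := by
    have h4 : 4 < a * (4 + ε') := by
      rw [ha_def, hδ2]
      nlinarith
    have : (1 / a) * 4 < 4 + ε' := by
      rw [div_mul_eq_mul_div, div_lt_iff₀ ha]
      linarith [h4]
    linarith
  have hup_ev : ∀ᶠ τ in atTop, Real.pi / 2 / Real.sin δ * τ⁻¹
      + (1 / a) * (Real.arsinh (a * δ / b * Real.exp (4 * τ)) / τ) < 4 + ε :=
    hupT.eventually_lt_const hlim
  rw [← eventually_atTop]
  filter_upwards [eventually_ge_atTop (1:ℝ), hlow_ev, hup_ev] with τ hτ1 hlow hup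
  have hτ0 : (0:ℝ) < τ := by linarith
  have hcpos : 0 < kappaT τ := kappaT_pos τ
  have hexp : (kappaT τ)⁻¹ = Real.exp (4 * τ) := by
    rw [kappaT, ← Real.exp_neg]; ring_nf
  have e1 : δ / kappaT τ = δ * Real.exp (4 * τ) := by
    rw [div_eq_mul_inv, hexp]
  have e2 : a * δ / (b * kappaT τ) = a * δ / b * Real.exp (4 * τ) := by
    rw [div_mul_eq_div_div, div_eq_mul_inv (a * δ / b), hexp]
  have hKlow := K_lower hδ0 hδ1 hτ0
  have hKup := K_upper hδ0 hδ1 hτ0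
  rw [e1] at hKlow
  rw [e2] at hKup
  rw [Real.dist_eq, abs_sub_lt_iff]
  constructor
  · -- K/τ - 4 < ε
    have : ellipticK (kappa τ) / τ ≤ Real.pi / 2 / Real.sin δ * τ⁻¹
        + (1 / a) * (Real.arsinh (a * δ / b * Real.exp (4 * τ)) / τ) := by
      rw [show Real.pi / 2 / Real.sin δ * τ⁻¹
          + (1 / a) * (Real.arsinh (a * δ / b * Real.exp (4 * τ)) / τ)
          = (Real.pi / 2 / Real.sin δ
            + (1 / a) * Real.arsinh (a * δ / b * Real.exp (4 * τ))) / τ by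
        field_simp]
      exact div_le_div_of_nonneg_right hKup hτ0.le
    linarith
  · -- 4 - K/τ < ε
    have : Real.arsinh (δ * Real.exp (4 * τ)) / τ ≤ ellipticK (kappa τ) / τ :=
      div_le_div_of_nonneg_right hKlow hτ0.le
    linarith

lemma exp_decay (c : ℝ) (hc : 0 < c) (n : ℕ) :
    Tendsto (fun τ : ℝ => τ ^ n * Real.exp (-c * τ)) atTop (𝓝 0) := by
  have h1 := (tendsto_pow_mul_exp_neg_atTop_nhds_zero n).comp
    (tendsto_id.const_mul_atTop hc : Tendsto (fun τ : ℝ => c * τ) atTop atTop)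
  have h2 := h1.const_mul ((c ^ n : ℝ))⁻¹
  rw [mul_zero] at h2
  apply h2.congr
  intro τ
  simp only [Function.comp_apply, id_eq]
  rw [mul_pow, neg_mul]
  field_simp

lemma exp_decay0 (c : ℝ) (hc : 0 < c) :
    Tendsto (fun τ : ℝ => Real.exp (-c * τ)) atTop (𝓝 0) := by
  have := exp_decay c hc 0
  simpa using this

lemma E_tendsto : Tendsto (fun τ => ellipticE (kappa τ)) atTop (𝓝 1) := by
  have hup : Tendsto (fun τ : ℝ => 1 + Real.exp (-4 * τ) * (Real.pi / 2)) atTop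
      (𝓝 (1 + 0 * (Real.pi / 2))) :=
    tendsto_const_nhds.add ((exp_decay0 4 (by norm_num)).mul_const _)
  rw [zero_mul, add_zero] at hup
  apply tendsto_of_tendsto_of_tendsto_of_le_of_le' tendsto_const_nhds hup
  · filter_upwards [eventually_ge_atTop (0:ℝ)] with τ hτ
    exact (E_bounds hτ).1
  · filter_upwards [eventually_ge_atTop (0:ℝ)] with τ hτ
    exact (E_bounds hτ).2


lemma alg (E K e p t : ℝ) (hp : p ≠ 0) (ht : t ≠ 0) (hd : 1 - e ≠ 0) :
    16 / p ^ 4 * ((1 - e) ^ 2)⁻¹ *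
      (E ^ 2 + e * K ^ 2 - 2 * (e * (E * K))) *
      (2 * (E * (K / t)) - E ^ 2 * t⁻¹ - e * K ^ 2 / t)
    = ((4 / p ^ 2 * (E * K)) ^ 2
        - (-(4 / (p ^ 2 * (1 - e))) * ((E - e * K) * (K - E))) ^ 2) / t := by
  field_simp
  ring

lemma ratio_tendsto :
    Tendsto (fun τ => (G₁₂ τ ^ 2 - G₁₁ τ ^ 2) / τ) atTop (𝓝 (128 / Real.pi ^ 4)) := by
  have hE : Tendsto (fun τ => ellipticE (kappa τ)) atTop (𝓝 1) := E_tendsto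
  have hK : Tendsto (fun τ => ellipticK (kappa τ) / τ) atTop (𝓝 4) := K_div_tendsto
  have he8 : Tendsto (fun τ : ℝ => Real.exp (-8 * τ)) atTop (𝓝 0) :=
    exp_decay0 8 (by norm_num)
  have ht1 : Tendsto (fun τ : ℝ => τ * Real.exp (-8 * τ)) atTop (𝓝 0) := by
    simpa using exp_decay 8 (by norm_num) 1
  have ht2 : Tendsto (fun τ : ℝ => τ ^ 2 * Real.exp (-8 * τ)) atTop (𝓝 0) :=
    exp_decay 8 (by norm_num) 2
  have hK2 : Tendsto (fun τ => Real.exp (-8 * τ) * ellipticK (kappa τ) ^ 2) atTop (𝓝 0) := by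
    have h := (hK.mul hK).mul ht2
    rw [show (4:ℝ) * 4 * 0 = 0 by ring] at h
    apply h.congr'
    filter_upwards [eventually_ge_atTop (1:ℝ)] with τ hτ
    have hτ0 : τ ≠ 0 := by intro h0; rw [h0] at hτ; linarith
    field_simp
  have hEK : Tendsto (fun τ =>
      Real.exp (-8 * τ) * (ellipticE (kappa τ) * ellipticK (kappa τ))) atTop (𝓝 0) := by
    have h := (hE.mul hK).mul ht1
    rw [show (1:ℝ) * 4 * 0 = 0 by ring] at h
    apply h.congr'
    filter_upwards [eventually_ge_atTop (1:ℝ)] with τ hτ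
    have hτ0 : τ ≠ 0 := by intro h0; rw [h0] at hτ; linarith
    field_simp
  have hK2τ : Tendsto (fun τ => Real.exp (-8 * τ) * ellipticK (kappa τ) ^ 2 / τ) atTop
      (𝓝 0) := by
    have h := (hK.mul hK).mul ht1
    rw [show (4:ℝ) * 4 * 0 = 0 by ring] at h
    apply h.congr'
    filter_upwards [eventually_ge_atTop (1:ℝ)] with τ hτ
    have hτ0 : τ ≠ 0 := by intro h0; rw [h0] at hτ; linarith
    field_simp
  have hA : Tendsto (fun τ => ellipticE (kappa τ) ^ 2
      + Real.exp (-8 * τ) * ellipticK (kappa τ) ^ 2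
      - 2 * (Real.exp (-8 * τ) * (ellipticE (kappa τ) * ellipticK (kappa τ)))) atTop
      (𝓝 1) := by
    have h := ((hE.pow 2).add hK2).sub (hEK.const_mul 2)
    rw [show ((1:ℝ) ^ 2 + 0 - 2 * 0) = 1 by ring] at h
    exact h
  have hB : Tendsto (fun τ => 2 * (ellipticE (kappa τ) * (ellipticK (kappa τ) / τ))
      - ellipticE (kappa τ) ^ 2 * τ⁻¹
      - Real.exp (-8 * τ) * ellipticK (kappa τ) ^ 2 / τ) atTop (𝓝 8) := by
    have h := (((hE.mul hK).const_mul 2).sub ((hE.pow 2).mul tendsto_inv_atTop_zero)).sub hK2τ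
    rw [show ((2:ℝ) * (1 * 4) - 1 ^ 2 * 0 - 0) = 8 by ring] at h
    exact h
  have hinv : Tendsto (fun τ : ℝ => ((1 - Real.exp (-8 * τ)) ^ 2)⁻¹) atTop (𝓝 1) := by
    have h := ((tendsto_const_nhds.sub he8).pow 2).inv₀
      (show ((1:ℝ) - 0) ^ 2 ≠ 0 by norm_num)
    rw [show (((1:ℝ) - 0) ^ 2)⁻¹ = 1 by norm_num] at h
    exact h
  have key := ((hinv.const_mul (16 / Real.pi ^ 4)).mul hA).mul hB
  rw [show 16 / Real.pi ^ 4 * 1 * 1 * 8 = 128 / Real.pi ^ 4 by ring] at key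
  apply key.congr'
  filter_upwards [eventually_ge_atTop (1:ℝ)] with τ hτ
  have hτpos : (0:ℝ) < τ := by linarith
  have hτ0 : τ ≠ 0 := hτpos.ne'
  have hτnn : (0:ℝ) ≤ τ := hτpos.le
  have hlt : Real.exp (-8 * τ) < 1 := by
    rw [Real.exp_lt_one_iff]; linarith
  have hne : 1 - Real.exp (-8 * τ) ≠ 0 := by linarith
  simp only [G₁₂, G₁₁, kappa_sq hτnn, kappaT_sq]
  exact alg _ _ _ _ _ Real.pi_ne_zero hτ0 hne

/-- The Rényi entropy grows logarithmically: R(τ) − (1/2)·log τ → (1/2)·log(128/π⁴). -/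
theorem stmt_8 :
    Tendsto (fun τ => (1 / 2) * Real.log (G₁₂ τ ^ 2 - G₁₁ τ ^ 2) -
      (1 / 2) * Real.log τ) atTop (𝓝 ((1 / 2) * Real.log (128 / Real.pi ^ 4))) := by
  have hF := ratio_tendsto
  have hpos : ∀ᶠ τ in atTop, 0 < (G₁₂ τ ^ 2 - G₁₁ τ ^ 2) / τ :=
    hF.eventually_const_lt (by positivity)
  have hne : (128 : ℝ) / Real.pi ^ 4 ≠ 0 := by positivity
  have hcomp : Tendsto (fun τ => (1 / 2) * Real.log ((G₁₂ τ ^ 2 - G₁₁ τ ^ 2) / τ)) atTop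
      (𝓝 ((1 / 2) * Real.log (128 / Real.pi ^ 4))) :=
    Tendsto.const_mul _ ((Real.continuousAt_log hne).tendsto.comp hF)
  apply hcomp.congr'
  filter_upwards [eventually_ge_atTop (1:ℝ), hpos] with τ hτ hp
  have hτpos : (0:ℝ) < τ := by linarith
  have hFpos : 0 < G₁₂ τ ^ 2 - G₁₁ τ ^ 2 := by
    have h := mul_pos hp hτpos
    rwa [div_mul_cancel₀ _ hτpos.ne'] at h
  rw [Real.log_div hFpos.ne' hτpos.ne']
  ring
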